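/- For every odd natural number n = 2m+1 with m ≥ 1, the number of elements q of S_n with q < 1/2 equals Φ(n) − ψ(n), i.e., equals (1/2)·∑_{s=1}^{m} φ(2s+1) minus ∑_{s=1}^{m} φ(2⌊(s+1)/2⌋ − 1, 4s+2). -/

import Mathlib

open Finset

private def EF (s : ℕ) : Finset ℕ :=
  (Finset.range (2*s+1)).filter (fun b => Even b ∧ Nat.gcd b (2*s+1) = 1)

private def LF (s : ℕ) : Finset ℕ := (EF s).filter (fun b => 2*b < 2*s+1)
private def UF (s : ℕ) : Finset ℕ := (EF s).filter (fun b => ¬ 2*b < 2*s+1)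

private lemma mem_EF {s b : ℕ} :
    b ∈ EF s ↔ b < 2*s+1 ∧ Even b ∧ Nat.gcd b (2*s+1) = 1 := by
  simp [EF, and_assoc]

private lemma EF_pos {s b : ℕ} (hs : 1 ≤ s) (hb : b ∈ EF s) : 0 < b := by
  rcases mem_EF.1 hb with ⟨-, -, hg⟩
  rcases Nat.eq_zero_or_pos b with h | h
  · subst h; simp [Nat.gcd_zero_left] at hg; omega
  · exact h

private lemma gcd_sub_eq {α b : ℕ} (hb : b ≤ α) :
    Nat.gcd (α - b) α = Nat.gcd b α := by
  obtain ⟨c, rfl⟩ : ∃ c, α = b + c := ⟨α - b, by omega⟩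
  rw [Nat.add_sub_cancel_left, Nat.gcd_add_self_right, Nat.gcd_self_add_right, Nat.gcd_comm]

private lemma EF_card {s : ℕ} (hs : 1 ≤ s) :
    2 * (EF s).card = Nat.totient (2*s+1) := by
  classical
  set α := 2*s+1 with hα
  have htot : Nat.totient α = ((range α).filter (fun b => Nat.gcd b α = 1)).card := by
    rw [Nat.totient]
    congr 1
    apply filter_congr
    intro x _
    simp [Nat.Coprime, Nat.gcd_comm]
  have hsplit :
      (((range α).filter (fun b => Nat.gcd b α = 1)).filter (fun b => Even b)).card
      + (((range α).filter (fun b => Nat.gcd b α = 1)).filter (fun b => ¬ Even b)).card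
      = ((range α).filter (fun b => Nat.gcd b α = 1)).card :=
    Finset.card_filter_add_card_filter_not _
  have hE : ((range α).filter (fun b => Nat.gcd b α = 1)).filter (fun b => Even b) = EF s := by
    rw [EF, filter_filter]
    apply filter_congr
    intro x _
    simp [and_comm]
    exact fun _ => Iff.rfl
  have hbij : (EF s).card
      = (((range α).filter (fun b => Nat.gcd b α = 1)).filter (fun b => ¬ Even b)).card := by
    apply Finset.card_nbij' (fun b => α - b) (fun b => α - b)
    · intro b hb
      rcases mem_EF.1 hb with ⟨hlt, heven, hg⟩
      have hpos := EF_pos hs hb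
      simp only [Finset.mem_coe, mem_filter, mem_range]
      refine ⟨⟨by omega, gcd_sub_eq (α := α) (b := b) (by omega) ▸ hg⟩, ?_⟩
      rw [Nat.even_iff] at heven ⊢
      omega
    · intro b hb
      beta_reduce
      simp only [Finset.mem_coe, mem_filter, mem_range] at hb
      obtain ⟨⟨hlt, hg⟩, hodd⟩ := hb
      have hpos : 0 < b := by
        rcases Nat.eq_zero_or_pos b with h | h
        · exfalso; apply hodd; subst h; exact Even.zero
        · exact h
      rw [Finset.mem_coe, mem_EF]
      refine ⟨by omega, ?_, gcd_sub_eq (α := α) (b := b) (by omega) ▸ hg⟩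
      rw [Nat.even_iff]
      rw [Nat.even_iff] at hodd
      omega
    · intro b hb
      rcases mem_EF.1 hb with ⟨hlt, -, -⟩
      beta_reduce
      omega
    · intro b hb
      simp only [Finset.mem_coe, mem_filter, mem_range] at hb
      beta_reduce
      omega
  have hEc : (((range α).filter (fun b => Nat.gcd b α = 1)).filter (fun b => Even b)).card = (EF s).card := by rw [hE]
  omega

private lemma UF_card {s : ℕ} (hs : 1 ≤ s) :
    (UF s).card = ((Finset.Icc 1 (2 * ((s + 1) / 2) - 1)).filter
      (fun i => Nat.gcd i (4 * s + 2) = 1)).card := by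
  have hco : ∀ i : ℕ, Nat.gcd i (4*s+2) = 1 ↔ (¬ Even i ∧ Nat.gcd i (2*s+1) = 1) := by
    intro i
    rw [show 4*s+2 = 2*(2*s+1) by ring]
    rw [show (Nat.gcd i (2*(2*s+1)) = 1) ↔ Nat.Coprime i (2*(2*s+1)) from Iff.rfl]
    rw [Nat.coprime_mul_iff_right, Nat.coprime_two_right, ← Nat.not_even_iff_odd]
  have hmemT : ∀ i : ℕ, (i ∈ (Finset.Icc 1 (2 * ((s + 1) / 2) - 1)).filter
      (fun i => Nat.gcd i (4 * s + 2) = 1)) ↔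
      (i ≤ s ∧ ¬ Even i ∧ Nat.gcd i (2*s+1) = 1) := by
    intro i
    rw [mem_filter, Finset.mem_Icc, hco]
    constructor
    · rintro ⟨⟨h1, h2⟩, hodd, hg⟩
      rw [Nat.even_iff] at hodd
      exact ⟨by omega, by rw [Nat.even_iff]; omega, hg⟩
    · rintro ⟨h1, hodd, hg⟩
      rw [Nat.even_iff] at hodd
      exact ⟨⟨by omega, by omega⟩, by rw [Nat.even_iff]; omega, hg⟩
  apply Finset.card_nbij' (fun b => 2*s+1 - b) (fun i => 2*s+1 - i)
  · intro b hb
    beta_reduce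
    rw [UF, Finset.mem_coe, mem_filter] at hb
    obtain ⟨hbE, hge⟩ := hb
    rcases mem_EF.1 hbE with ⟨hlt, heven, hg⟩
    rw [Finset.mem_coe, hmemT]
    rw [Nat.even_iff] at heven
    refine ⟨by omega, ?_, gcd_sub_eq (α := 2*s+1) (b := b) (by omega) ▸ hg⟩
    rw [Nat.even_iff]; omega
  · intro i hi
    beta_reduce
    rw [Finset.mem_coe, hmemT] at hi
    obtain ⟨hle, hodd, hg⟩ := hi
    rw [Nat.even_iff] at hodd
    rw [UF, Finset.mem_coe, mem_filter, mem_EF]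
    have h1 : 1 ≤ i := by omega
    refine ⟨⟨by omega, ?_, gcd_sub_eq (α := 2*s+1) (b := i) (by omega) ▸ hg⟩, by omega⟩
    rw [Nat.even_iff]; omega
  · intro b hb
    rw [UF, Finset.mem_coe, mem_filter] at hb
    rcases mem_EF.1 hb.1 with ⟨hlt, -, -⟩
    beta_reduce
    omega
  · intro i hi
    rw [Finset.mem_coe, hmemT] at hi
    beta_reduce
    omega

private def ff : ℕ × ℕ → ℚ := fun p => (p.2 : ℚ) / ((2*p.1+1 : ℕ) : ℚ)

private lemma key_inj {s t b c : ℕ} (hb : Nat.gcd b (2*s+1) = 1) (hc : Nat.gcd c (2*t+1) = 1)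
    (h : ff (s, b) = ff (t, c)) : s = t ∧ b = c := by
  have hs0 : (0:ℚ) < ((2*s+1 : ℕ) : ℚ) := by exact_mod_cast Nat.succ_pos _
  have ht0 : (0:ℚ) < ((2*t+1 : ℕ) : ℚ) := by exact_mod_cast Nat.succ_pos _
  have h' := (div_eq_div_iff (ne_of_gt hs0) (ne_of_gt ht0)).1 h
  have hnat : b * (2*t+1) = c * (2*s+1) := by exact_mod_cast h'
  have hd1 : (2*s+1) ∣ (2*t+1) := by
    have hdvd : (2*s+1) ∣ b * (2*t+1) := ⟨c, by rw [hnat, Nat.mul_comm]⟩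
    exact (Nat.Coprime.coprime_dvd_left (dvd_refl _) ((Nat.coprime_comm).1 hb)).dvd_of_dvd_mul_left hdvd
  have hd2 : (2*t+1) ∣ (2*s+1) := by
    have hdvd : (2*t+1) ∣ c * (2*s+1) := ⟨b, by rw [← hnat, Nat.mul_comm]⟩
    exact (Nat.Coprime.coprime_dvd_left (dvd_refl _) ((Nat.coprime_comm).1 hc)).dvd_of_dvd_mul_left hdvd
  have hst : 2*s+1 = 2*t+1 := Nat.dvd_antisymm hd1 hd2
  have hs : s = t := by omega
  subst hs
  refine ⟨rfl, ?_⟩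
  have := hnat
  exact Nat.eq_of_mul_eq_mul_right (by omega) this

theorem stmt_14 (m n : ℕ) (hm : 1 ≤ m) (hn : n = 2 * m + 1) :
    ({q : ℚ | (∃ α β : ℕ, 0 < α ∧ 0 < β ∧ Odd α ∧ Even β ∧ β < α ∧ α ≤ n ∧
        q = (β : ℚ) / α) ∧ q < 1 / 2} : Set ℚ).ncard =
      (∑ s ∈ Finset.Icc 1 m, Nat.totient (2 * s + 1)) / 2 -
        ∑ s ∈ Finset.Icc 1 m,
          ((Finset.Icc 1 (2 * ((s + 1) / 2) - 1)).filter
            (fun i => Nat.gcd i (4 * s + 2) = 1)).card := by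
  classical
  subst hn
  set F : Finset (ℕ × ℕ) := (Finset.Icc 1 m).biUnion (fun s => (LF s).image (fun b => (s, b)))
    with hF
  have hmemF : ∀ p : ℕ × ℕ, p ∈ F ↔ (1 ≤ p.1 ∧ p.1 ≤ m ∧ p.2 ∈ LF p.1) := by
    rintro ⟨s, b⟩
    simp only [hF, Finset.mem_biUnion, Finset.mem_Icc, Finset.mem_image]
    constructor
    · rintro ⟨t, ⟨h1, h2⟩, c, hc, heq⟩
      obtain ⟨rfl, rfl⟩ : t = s ∧ c = b := by
        constructor <;> [exact congrArg Prod.fst heq; exact congrArg Prod.snd heq]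
      exact ⟨h1, h2, hc⟩
    · rintro ⟨h1, h2, h3⟩
      exact ⟨s, ⟨h1, h2⟩, b, h3, rfl⟩
  have hmemLF : ∀ s b : ℕ, b ∈ LF s ↔
      (b < 2*s+1 ∧ Even b ∧ Nat.gcd b (2*s+1) = 1 ∧ 2*b < 2*s+1) := by
    intro s b
    rw [LF, mem_filter, mem_EF]
    tauto
  have hcard : F.card = ∑ s ∈ Finset.Icc 1 m, (LF s).card := by
    rw [hF, Finset.card_biUnion]
    · exact Finset.sum_congr rfl fun s _ =>
        Finset.card_image_of_injective _ (fun a b h => congrArg Prod.snd h)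
    · intro x hx y hy hxy
      rw [Function.onFun, Finset.disjoint_left]
      intro p hp hq
      simp only [Finset.mem_image] at hp hq
      obtain ⟨a, -, rfl⟩ := hp
      obtain ⟨b, -, heq⟩ := hq
      exact hxy (congrArg Prod.fst heq).symm
  have hset : ({q : ℚ | (∃ α β : ℕ, 0 < α ∧ 0 < β ∧ Odd α ∧ Even β ∧ β < α ∧ α ≤ 2*m+1 ∧
        q = (β : ℚ) / α) ∧ q < 1 / 2} : Set ℚ) = ↑(F.image ff) := by
    ext q
    simp only [Set.mem_setOf_eq, Finset.coe_image, Set.mem_image, Finset.mem_coe]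
    constructor
    · rintro ⟨⟨α, β, hα, hβ, hαodd, hβeven, hβα, hαn, rfl⟩, hq⟩
      obtain ⟨d, hd⟩ : ∃ d, d = Nat.gcd β α := ⟨_, rfl⟩
      have hd0 : 0 < d := hd ▸ Nat.gcd_pos_of_pos_right _ hα
      obtain ⟨a, ha⟩ : ∃ a, α = d * a := hd ▸ Nat.gcd_dvd_right β α
      obtain ⟨b, hb⟩ : ∃ b, β = d * b := hd ▸ Nat.gcd_dvd_left β α
      have hco : Nat.gcd b a = 1 := by
        have h := Nat.coprime_div_gcd_div_gcd (m := β) (n := α)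
          (hd ▸ hd0 : 0 < Nat.gcd β α)
        rwa [← hd, hb, ha, Nat.mul_div_cancel_left _ hd0, Nat.mul_div_cancel_left _ hd0] at h
      have hdodd : Odd d ∧ Odd a := by
        rw [ha, Nat.odd_mul] at hαodd; exact hαodd
      have hbeven : Even b := by
        rw [hb, Nat.even_mul] at hβeven
        rcases hβeven with h | h
        · exact absurd h (by simpa [Nat.not_even_iff_odd] using hdodd.1)
        · exact h
      have hba : b < a := by
        rw [ha, hb] at hβα; exact Nat.lt_of_mul_lt_mul_left hβα
      have hb0 : 0 < b := by
        rcases Nat.eq_zero_or_pos b with h | h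
        · exfalso; rw [hb, h, Nat.mul_zero] at hβ; omega
        · exact h
      have hqeq : (β : ℚ) / α = (b : ℚ) / a := by
        rw [ha, hb]
        push_cast
        rw [mul_div_mul_left]
        exact_mod_cast hd0.ne'
      have ha0 : (0:ℚ) < (a : ℚ) := by exact_mod_cast (show 0 < a by omega)
      have h2b : 2 * b < a := by
        rw [hqeq, div_lt_div_iff₀ ha0 (by norm_num : (0:ℚ) < 2)] at hq
        have h2 : ((2*b : ℕ) : ℚ) < ((a : ℕ) : ℚ) := by push_cast; linarith
        exact_mod_cast h2
      obtain ⟨s, hs⟩ := hdodd.2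
      have hs1 : 1 ≤ s := by omega
      have hsm : s ≤ m := by
        have hadvd : a ∣ α := ⟨d, by rw [ha, Nat.mul_comm]⟩
        have := Nat.le_of_dvd hα hadvd
        omega
      refine ⟨(s, b), (hmemF (s, b)).2 ⟨hs1, hsm, (hmemLF s b).2 ⟨by omega, hbeven, by rw [← hs]; exact hco, by omega⟩⟩, ?_⟩
      rw [ff, hqeq, hs]
    · rintro ⟨⟨s, b⟩, hp, rfl⟩
      obtain ⟨hs1, hsm, hbL⟩ := (hmemF (s, b)).1 hp
      obtain ⟨hblt, hbeven, hbg, hb2⟩ := (hmemLF s b).1 hbL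
      have hb0 : 0 < b := by
        rcases Nat.eq_zero_or_pos b with h | h
        · exfalso; rw [h] at hbg; simp [Nat.gcd_zero_left] at hbg; omega
        · exact h
      refine ⟨⟨2*s+1, b, by omega, hb0, ⟨s, by ring⟩, hbeven, hblt, by omega, rfl⟩, ?_⟩
      rw [ff]
      rw [div_lt_div_iff₀ (by exact_mod_cast Nat.succ_pos _ : (0:ℚ) < ((2*s+1:ℕ):ℚ))
        (by norm_num : (0:ℚ) < 2)]
      have h2 : ((2*b : ℕ) : ℚ) < ((2*s+1 : ℕ) : ℚ) := by exact_mod_cast hb2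
      push_cast at h2 ⊢
      linarith
  have hinj : Set.InjOn ff ↑F := by
    rintro ⟨s, b⟩ hp ⟨t, c⟩ hq h
    simp only [Finset.mem_coe] at hp hq
    obtain ⟨-, -, hbL⟩ := (hmemF _).1 hp
    obtain ⟨-, -, hcL⟩ := (hmemF _).1 hq
    obtain ⟨rfl, rfl⟩ := key_inj ((hmemLF _ _).1 hbL).2.2.1 ((hmemLF _ _).1 hcL).2.2.1 h
    rfl
  rw [hset, Set.ncard_coe_finset, Finset.card_image_of_injOn hinj, hcard]
  have h1 : ∑ s ∈ Finset.Icc 1 m, Nat.totient (2*s+1)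
      = 2 * ∑ s ∈ Finset.Icc 1 m, (EF s).card := by
    rw [Finset.mul_sum]
    exact Finset.sum_congr rfl fun s hs => (EF_card (Finset.mem_Icc.1 hs).1).symm
  have h2 : ∑ s ∈ Finset.Icc 1 m, ((Finset.Icc 1 (2 * ((s + 1) / 2) - 1)).filter
      (fun i => Nat.gcd i (4 * s + 2) = 1)).card
      = ∑ s ∈ Finset.Icc 1 m, (UF s).card := by
    exact Finset.sum_congr rfl fun s hs => (UF_card (Finset.mem_Icc.1 hs).1).symm
  have h3 : (∑ s ∈ Finset.Icc 1 m, (LF s).card) + (∑ s ∈ Finset.Icc 1 m, (UF s).card)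
      = ∑ s ∈ Finset.Icc 1 m, (EF s).card := by
    rw [← Finset.sum_add_distrib]
    exact Finset.sum_congr rfl fun s _ =>
      Finset.card_filter_add_card_filter_not _
  rw [h1, h2]
  omega
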